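/- arXiv:2308.14203 — 9 statements merged into one kernel-verified Lean document; each statement's English description precedes it below -/
import Mathlib

section
/- Let V be a linear subspace of L(ℝⁿ, ℝᵐ) containing a rank-one operator ψ ⊗ w (with ψ a nonzero linear functional on ℝⁿ and w a nonzero vector in ℝᵐ). Then for every k ≥ 0, the space M_k(V) is nonzero; in particular δ(V) = ∞. -/
open Function

noncomputable section

variable {E F : Type*} [AddCommGroup E] [Module ℝ E] [AddCommGroup F] [Module ℝ F]

/-- `Mk k V` is the space of symmetric `k`-multilinear maps all of whose partial
contractions (fixing all slots but one) lie in `V`. -/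
def Mk (k : ℕ) (V : Submodule ℝ (E →ₗ[ℝ] F)) :
    Submodule ℝ (MultilinearMap ℝ (fun _ : Fin k => E) F) where
  carrier := {T | (∀ (σ : Equiv.Perm (Fin k)) (x : Fin k → E), T (x ∘ σ) = T x) ∧
    ∀ (x : Fin k → E) (i : Fin k), T.toLinearMap x i ∈ V}
  add_mem' := by
    rintro T S ⟨hT1, hT2⟩ ⟨hS1, hS2⟩
    refine ⟨fun σ x => by simp [hT1 σ x, hS1 σ x], fun x i => ?_⟩
    have h : (T + S).toLinearMap x i = T.toLinearMap x i + S.toLinearMap x i := by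
      ext z; simp
    rw [h]; exact V.add_mem (hT2 x i) (hS2 x i)
  zero_mem' := by
    refine ⟨fun σ x => rfl, fun x i => ?_⟩
    have h : (0 : MultilinearMap ℝ (fun _ : Fin k => E) F).toLinearMap x i = 0 := by
      ext z; simp
    rw [h]; exact V.zero_mem
  smul_mem' := by
    rintro c T ⟨hT1, hT2⟩
    refine ⟨fun σ x => by simp [hT1 σ x], fun x i => ?_⟩
    have h : (c • T).toLinearMap x i = c • T.toLinearMap x i := by
      ext z; simp
    rw [h]; exact V.smul_mem c (hT2 x i)

end

/-- If `V` contains a rank-one operator `ψ ⊗ w` (with `ψ ≠ 0`, `w ≠ 0`), then `M_k(V) ≠ 0`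
for every `k`; in particular `δ(V) = ∞`. -/
theorem rankOne_implies_Mk_ne_zero {n m : ℕ}
    (V : Submodule ℝ ((Fin n → ℝ) →ₗ[ℝ] (Fin m → ℝ)))
    (ψ : (Fin n → ℝ) →ₗ[ℝ] ℝ) (w : Fin m → ℝ) (hψ : ψ ≠ 0) (hw : w ≠ 0)
    (hV : ψ.smulRight w ∈ V) (k : ℕ) :
    ∃ T : MultilinearMap ℝ (fun _ : Fin k => (Fin n → ℝ)) (Fin m → ℝ),
      T ∈ Mk k V ∧ T ≠ 0 := by

  obtain ⟨v, hv⟩ : ∃ v, ψ v ≠ 0 := by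
    by_contra h
    push_neg at h
    exact hψ (LinearMap.ext fun v => h v)
  refine ⟨(MultilinearMap.mkPiRing ℝ (Fin k) w).compLinearMap (fun _ => ψ), ⟨?_, ?_⟩, ?_⟩
  · intro σ x
    simp only [MultilinearMap.compLinearMap_apply, MultilinearMap.mkPiRing_apply,
      Function.comp_apply]
    congr 1
    exact Equiv.prod_comp σ (fun j => ψ (x j))
  · intro x i
    have h : ((MultilinearMap.mkPiRing ℝ (Fin k) w).compLinearMap
        (fun _ => ψ)).toLinearMap x i
        = (∏ j ∈ (Finset.univ \ {i}), ψ (x j)) • ψ.smulRight w := by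
      refine LinearMap.ext fun z => ?_
      simp only [MultilinearMap.toLinearMap_apply, MultilinearMap.compLinearMap_apply,
        MultilinearMap.mkPiRing_apply, LinearMap.smul_apply, LinearMap.smulRight_apply]
      have : (∏ j, ψ (Function.update x i z j))
          = ψ z * ∏ j ∈ (Finset.univ \ {i}), ψ (x j) := by
        have h2 : (fun j => ψ (Function.update x i z j))
            = Function.update (fun j => ψ (x j)) i (ψ z) := by
          ext j
          exact Function.apply_update (fun _ y => ψ y) x i z j
        rw [h2, Finset.prod_update_of_mem (Finset.mem_univ i)]
      rw [this, mul_smul, smul_comm]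
    rw [h]
    exact V.smul_mem _ hV
  · intro h
    have := congrArg (fun T => T (fun _ => v)) h
    simp only [MultilinearMap.compLinearMap_apply, MultilinearMap.mkPiRing_apply,
      MultilinearMap.zero_apply, Finset.prod_const, Finset.card_univ, Fintype.card_fin] at this
    exact hw (by
      have hne : (ψ v) ^ k ≠ 0 := pow_ne_zero k hv
      have := smul_eq_zero.mp this
      tauto)
end

section
/- Let W ⊆ L(ℝ², ℝ²) be the two-dimensional space spanned by the identity I₂ and the rotation J₂ = [[0,−1],[1,0]] (i.e. the operators of multiplication by complex numbers under the identification ℝ² ≅ ℂ). Then for every k ≥ 0, M_k(W) ≠ 0; in particular δ(W) = ∞. -/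
/-! Under `ℝ² ≅ ℂ`, the symmetric `k`-linear map `(z₁, …, z_k) ↦ z₁ ⋯ z_k` (the polarization of
`z ↦ z^k`) has, in slot `i`, the partial contraction `w ↦ (∏_{j ≠ i} z_j) • w`: a complex
multiplication, hence a real combination of multiplication by `1` (the identity) and by `I`
(the rotation `J₂`). It is nonzero, as it sends `(1, …, 1)` to `1`. -/

open Function

open Finset

section ProductForm

variable {A E : Type*} [CommSemiring A] [Algebra ℝ A] [AddCommGroup E] [Module ℝ E]

def productForm (e : A ≃ₗ[ℝ] E) (k : ℕ) : MultilinearMap ℝ (fun _ : Fin k => E) E :=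
  e.toLinearMap.compMultilinearMap
    ((MultilinearMap.mkPiAlgebra ℝ (Fin k) A).compLinearMap fun _ => e.symm.toLinearMap)

variable (e : A ≃ₗ[ℝ] E) {k : ℕ}

theorem productForm_apply (x : Fin k → E) : productForm e k x = e (∏ i, e.symm (x i)) := rfl

theorem productForm_comp_perm (σ : Equiv.Perm (Fin k)) (x : Fin k → E) :
    productForm e k (x ∘ σ) = productForm e k x := by
  simp only [productForm_apply, comp_apply, Equiv.prod_comp σ fun i => e.symm (x i)]

theorem productForm_toLinearMap (x : Fin k → E) (i : Fin k) :
    (productForm e k).toLinearMap x i =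
      e.conj (LinearMap.mul ℝ A (∏ j ∈ univ.erase i, e.symm (x j))) := by
  ext z
  simp only [MultilinearMap.toLinearMap_apply, productForm_apply, LinearEquiv.conj_apply,
    LinearMap.coe_comp, LinearEquiv.coe_coe, comp_apply, LinearMap.mul_apply']
  rw [← mul_prod_erase univ _ (mem_univ i), update_self, mul_comm]
  congr 2
  exact prod_congr rfl fun j hj => by rw [update_of_ne (ne_of_mem_erase hj)]

theorem productForm_ne_zero [Nontrivial A] : productForm e k ≠ 0 := by
  intro h
  have := congrArg (fun T => e.symm (T fun _ => e 1)) h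
  simp [productForm_apply] at this

theorem productForm_mem_Mk {V : Submodule ℝ (E →ₗ[ℝ] E)} {S : Set A}
    (hS : Submodule.span ℝ S = ⊤) (hV : ∀ a ∈ S, e.conj (LinearMap.mul ℝ A a) ∈ V) :
    productForm e k ∈ Mk k V := by
  have hconj : ∀ c, e.conj (LinearMap.mul ℝ A c) ∈ V := by
    have : Submodule.span ℝ S ≤ V.comap (e.conj.toLinearMap ∘ₗ LinearMap.mul ℝ A) :=
      Submodule.span_le.2 hV
    exact fun c => this (hS ▸ Submodule.mem_top)
  exact ⟨productForm_comp_perm e, fun x i => productForm_toLinearMap e x i ▸ hconj _⟩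

end ProductForm

theorem basisOneI_equivFun_conj_mul_I :
    Complex.basisOneI.equivFun.conj (LinearMap.mul ℝ ℂ Complex.I) =
      Matrix.toLin' !![(0 : ℝ), -1; 1, 0] := by
  ext v i
  fin_cases v <;> fin_cases i <;>
    simp [LinearEquiv.conj_apply, Matrix.toLin'_apply, Matrix.mulVec, Fin.sum_univ_two]

/-- For `W = span {I₂, J₂} ⊆ L(ℝ², ℝ²)` (multiplications by complex numbers under
`ℝ² ≅ ℂ`), `M_k(W) ≠ 0` for every `k`; in particular `δ(W) = ∞`. -/
theorem Mk_complex_span_ne_zero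
    (J₂ : (Fin 2 → ℝ) →ₗ[ℝ] (Fin 2 → ℝ))
    (hJ : J₂ = Matrix.toLin' !![(0 : ℝ), -1; 1, 0])
    (W : Submodule ℝ ((Fin 2 → ℝ) →ₗ[ℝ] (Fin 2 → ℝ)))
    (hW : W = Submodule.span ℝ {LinearMap.id, J₂}) (k : ℕ) :
    ∃ T : MultilinearMap ℝ (fun _ : Fin k => (Fin 2 → ℝ)) (Fin 2 → ℝ),
      T ∈ Mk k W ∧ T ≠ 0 := by
  subst hJ hW
  refine ⟨productForm Complex.basisOneI.equivFun k,
    productForm_mem_Mk _ (RCLike.span_one_I (K := ℂ)) ?_, productForm_ne_zero _⟩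
  rintro a (rfl | rfl)
  · rw [show LinearMap.mul ℝ ℂ 1 = LinearMap.id from LinearMap.ext one_mul,
      LinearEquiv.conj_id]
    exact Submodule.subset_span (Set.mem_insert _ _)
  · rw [RCLike.I_to_complex, basisOneI_equivFun_conj_mul_I]
    exact Submodule.subset_span (Set.mem_insert_of_mem _ rfl)
end

section
/- The function V ↦ dim M_ℓ(V), from the Grassmannian of k-dimensional subspaces of L(ℝⁿ, ℝᵐ) to ℕ, is upper semicontinuous: if V_j → V in the Grassmannian and dim M_ℓ(V_j) = μ for all j, then dim M_ℓ(V) ≥ μ. -/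
/-!
Choose orthonormal bases of `M_ℓ(V_j)` (after identifying the finite-dimensional space of
multilinear maps with a Euclidean space); by compactness a subsequence of these frames converges
to an orthonormal, hence independent, family of `μ` maps. Both defining conditions of `M_ℓ` pass
to the limit: symmetry is a closed linear condition, and membership in the span of a converging
frame is closed as long as the limit frame is independent, because linear dependence of `k + 1`
vectors is a closed condition.
-/

open Function

open Filter Topology Submodule Set

theorem exists_strictMono_tendsto_orthonormal {X ι : Type*} [NormedAddCommGroup X]
    [InnerProductSpace ℝ X] [FiniteDimensional ℝ X] [Finite ι]
    (s : ℕ → ι → X) (hs : ∀ j, Orthonormal ℝ (s j)) :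
    ∃ t : ι → X, Orthonormal ℝ t ∧
      ∃ φ : ℕ → ℕ, StrictMono φ ∧ Tendsto (fun j => s (φ j)) atTop (𝓝 t) := by
  classical
  have hK : IsCompact (univ.pi fun _ : ι => Metric.closedBall (0 : X) 1) :=
    isCompact_univ_pi fun _ => isCompact_closedBall _ _
  obtain ⟨t, -, φ, hφ, hlim⟩ := hK.tendsto_subseq (x := s) fun j a _ => by
    simp [(hs j).1 a]
  refine ⟨t, orthonormal_iff_ite.2 fun a b => ?_, φ, hφ, hlim⟩
  exact tendsto_nhds_unique ((tendsto_pi_nhds.1 hlim a).inner (tendsto_pi_nhds.1 hlim b))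
    (tendsto_const_nhds.congr fun j => (orthonormal_iff_ite.1 (hs (φ j)) a b).symm)

theorem le_finrank_of_forall_tendsto_mem {X : Type*} [NormedAddCommGroup X]
    [InnerProductSpace ℝ X] [FiniteDimensional ℝ X] {U : ℕ → Submodule ℝ X}
    {C : Submodule ℝ X} {μ : ℕ} (hU : ∀ j, Module.finrank ℝ (U j) = μ)
    (hC : ∀ φ : ℕ → ℕ, StrictMono φ → ∀ (u : ℕ → X) (z : X),
      (∀ j, u j ∈ U (φ j)) → Tendsto u atTop (𝓝 z) → z ∈ C) :
    μ ≤ Module.finrank ℝ C := by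
  let s : ℕ → Fin μ → X := fun j =>
    (U j).subtypeₗᵢ ∘ (stdOrthonormalBasis ℝ (U j)).reindex (finCongr (hU j))
  have hs : ∀ j, Orthonormal ℝ (s j) := fun j =>
    (OrthonormalBasis.orthonormal _).comp_linearIsometry _
  obtain ⟨t, ht, φ, hφ, hlim⟩ := exists_strictMono_tendsto_orthonormal s hs
  have htC : ∀ a, t a ∈ C := fun a =>
    hC φ hφ (fun j => s (φ j) a) (t a) (fun j => by simp [s]) (tendsto_pi_nhds.1 hlim a)
  have hind : LinearIndependent ℝ (fun a => (⟨t a, htC a⟩ : C)) :=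
    .of_comp C.subtype ht.linearIndependent
  simpa using hind.fintype_card_le_finrank

section SpanLimit

variable {𝕜 : Type*} [NontriviallyNormedField 𝕜] [CompleteSpace 𝕜]
  {ι : Type*} {l : Filter ι} [l.NeBot] {k : ℕ}

theorem mem_span_of_tendsto {E : Type*} [NormedAddCommGroup E] [NormedSpace 𝕜 E]
    [FiniteDimensional 𝕜 E] {f : ι → Fin k → E} {g : Fin k → E} {w : ι → E} {z : E}
    (hf : Tendsto f l (𝓝 g)) (hw : Tendsto w l (𝓝 z)) (hg : LinearIndependent 𝕜 g)
    (hmem : ∀ j, w j ∈ span 𝕜 (range (f j))) :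
    z ∈ span 𝕜 (range g) := by
  by_contra hz
  have hindep : LinearIndependent 𝕜 (Fin.cons z g : Fin (k + 1) → E) :=
    linearIndependent_finCons.2 ⟨hg, hz⟩
  obtain ⟨j, hj⟩ := ((hw.finCons hf).eventually hindep.eventually).exists
  exact (linearIndependent_finCons.1 hj).2 (hmem j)

theorem mem_span_of_tendsto_apply {E F : Type*} [AddCommGroup E] [Module 𝕜 E]
    [FiniteDimensional 𝕜 E] [NormedAddCommGroup F] [NormedSpace 𝕜 F] [FiniteDimensional 𝕜 F]
    {f : ι → Fin k → E →ₗ[𝕜] F} {g : Fin k → E →ₗ[𝕜] F} {w : ι → E →ₗ[𝕜] F} {z : E →ₗ[𝕜] F}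
    (hf : ∀ i v, Tendsto (fun j => f j i v) l (𝓝 (g i v)))
    (hw : ∀ v, Tendsto (fun j => w j v) l (𝓝 (z v))) (hg : LinearIndependent 𝕜 g)
    (hmem : ∀ j, w j ∈ span 𝕜 (range (f j))) :
    z ∈ span 𝕜 (range g) := by
  let b := Module.finBasis 𝕜 E
  let e := (b.constr 𝕜 : (Fin _ → F) ≃ₗ[𝕜] E →ₗ[𝕜] F).symm
  rw [← apply_mem_span_image_iff_mem_span (f := e.toLinearMap) e.injective, ← range_comp]
  refine mem_span_of_tendsto (f := fun j => e ∘ f j) (w := fun j => e (w j))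
    (tendsto_pi_nhds.2 fun i => tendsto_pi_nhds.2 fun a => hf i (b a))
    (tendsto_pi_nhds.2 fun a => hw (b a)) (hg.map' e.toLinearMap e.ker) fun j => ?_
  rw [range_comp]
  exact apply_mem_span_image_of_mem_span e.toLinearMap (hmem j)

end SpanLimit

theorem mem_Mk_of_tendsto {E F ι : Type*} [AddCommGroup E] [Module ℝ E] [AddCommGroup F]
    [Module ℝ F] [TopologicalSpace F] [T2Space F] {l : Filter ι} [l.NeBot] {ℓ : ℕ}
    {V : ι → Submodule ℝ (E →ₗ[ℝ] F)} {V₀ : Submodule ℝ (E →ₗ[ℝ] F)}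
    (hV : ∀ (h : ι → E →ₗ[ℝ] F) (h₀ : E →ₗ[ℝ] F), (∀ j, h j ∈ V j) →
      (∀ v, Tendsto (fun j => h j v) l (𝓝 (h₀ v))) → h₀ ∈ V₀)
    {T : ι → MultilinearMap ℝ (fun _ : Fin ℓ => E) F}
    {T₀ : MultilinearMap ℝ (fun _ : Fin ℓ => E) F}
    (hT : ∀ j, T j ∈ Mk ℓ (V j)) (hlim : ∀ x, Tendsto (fun j => T j x) l (𝓝 (T₀ x))) :
    T₀ ∈ Mk ℓ V₀ :=
  ⟨fun σ x => tendsto_nhds_unique ((hlim (x ∘ σ)).congr fun j => (hT j).1 σ x) (hlim x),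
    fun x i => hV _ _ (fun j => (hT j).2 x i) fun v => by simpa using hlim (update x i v)⟩

theorem dim_Mk_upper_semicontinuous_general {n m k ℓ μ : ℕ}
    (f : ℕ → Fin k → ((Fin n → ℝ) →ₗ[ℝ] (Fin m → ℝ)))
    (g : Fin k → ((Fin n → ℝ) →ₗ[ℝ] (Fin m → ℝ)))
    (hconv : ∀ (i : Fin k) (v : Fin n → ℝ),
      Filter.Tendsto (fun j => f j i v) Filter.atTop (nhds (g i v)))
    (hframeV : Module.finrank ℝ (Submodule.span ℝ (Set.range g)) = k)
    (hμ : ∀ j, Module.finrank ℝ (Mk ℓ (Submodule.span ℝ (Set.range (f j)))) = μ) :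
    μ ≤ Module.finrank ℝ (Mk ℓ (Submodule.span ℝ (Set.range g))) := by
  have hg : LinearIndependent ℝ g := by
    rw [linearIndependent_iff_card_eq_finrank_span]
    simpa [Set.finrank] using hframeV.symm
  let W := MultilinearMap ℝ (fun _ : Fin ℓ => Fin n → ℝ) (Fin m → ℝ)
  let e : W ≃ₗ[ℝ] EuclideanSpace ℝ (Fin (Module.finrank ℝ W)) :=
    (Module.finBasis ℝ W).equivFun.trans (WithLp.linearEquiv 2 ℝ _).symm
  calc μ ≤ Module.finrank ℝ ((Mk ℓ (span ℝ (range g))).map e.toLinearMap) := by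
        refine le_finrank_of_forall_tendsto_mem
          (U := fun j => (Mk ℓ (span ℝ (range (f j)))).map e.toLinearMap)
          (fun j => (LinearEquiv.finrank_map_eq _ _).trans (hμ j)) fun φ hφ u z hu hz => ?_
        have hu' : ∀ j, e.symm (u j) ∈ Mk ℓ (span ℝ (range (f (φ j)))) := fun j =>
          (mem_map_equiv _).1 (hu j)
        rw [mem_map_equiv]
        refine mem_Mk_of_tendsto (fun h h₀ hh hlim => mem_span_of_tendsto_apply
          (fun i v => (hconv i v).comp hφ.tendsto_atTop) hlim hg hh) hu' fun x => ?_
        let evx : EuclideanSpace ℝ (Fin (Module.finrank ℝ W)) →ₗ[ℝ] Fin m → ℝ :=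
          { toFun := fun y => e.symm y x
            map_add' := fun y y' => by rw [map_add]; rfl
            map_smul' := fun c y => by rw [map_smul]; rfl }
        exact (evx.continuous_of_finiteDimensional.tendsto z).comp hz
    _ = _ := LinearEquiv.finrank_map_eq _ _

/-- Upper semicontinuity of `V ↦ dim M_ℓ(V)` on the Grassmannian of `k`-dimensional
subspaces of `L(ℝⁿ,ℝᵐ)`: if `V_j → V` (convergence of spanning frames) and
`dim M_ℓ(V_j) = μ` for all `j`, then `dim M_ℓ(V) ≥ μ`. -/
theorem dim_Mk_upper_semicontinuous {n m k ℓ μ : ℕ}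
    (f : ℕ → Fin k → ((Fin n → ℝ) →ₗ[ℝ] (Fin m → ℝ)))
    (g : Fin k → ((Fin n → ℝ) →ₗ[ℝ] (Fin m → ℝ)))
    (hconv : ∀ (i : Fin k) (v : Fin n → ℝ),
      Filter.Tendsto (fun j => f j i v) Filter.atTop (nhds (g i v)))
    (hframe : ∀ j, Module.finrank ℝ (Submodule.span ℝ (Set.range (f j))) = k)
    (hframeV : Module.finrank ℝ (Submodule.span ℝ (Set.range g)) = k)
    (hμ : ∀ j, Module.finrank ℝ (Mk ℓ (Submodule.span ℝ (Set.range (f j)))) = μ) :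
    μ ≤ Module.finrank ℝ (Mk ℓ (Submodule.span ℝ (Set.range g))) :=
  dim_Mk_upper_semicontinuous_general f g hconv hframeV hμ
end

section
/- Let conf(n) = {λI + A : λ ∈ ℝ, A ∈ M_n(ℝ) skew-symmetric} ⊆ L(ℝⁿ, ℝⁿ). Then M_2(conf(n)) consists exactly of those symmetric bilinear maps B : ℝⁿ × ℝⁿ → ℝⁿ of the form ⟨B(x,y), z⟩ = α(x)⟨y,z⟩ + α(y)⟨x,z⟩ − α(z)⟨x,y⟩ for some linear functional α on ℝⁿ. -/
open Function

noncomputable section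
open scoped RealInnerProductSpace

/-- The space of skew-symmetric operators on `ℝⁿ` (Euclidean space). -/
def skewSub (n : ℕ) :
    Submodule ℝ (EuclideanSpace ℝ (Fin n) →ₗ[ℝ] EuclideanSpace ℝ (Fin n)) where
  carrier := {A | ∀ x y, ⟪A x, y⟫ = -⟪x, A y⟫}
  add_mem' := by
    intro A B hA hB x y
    simp only [LinearMap.add_apply, inner_add_left, inner_add_right, hA x y, hB x y]
    ring
  zero_mem' := by intro x y; simp
  smul_mem' := by
    intro c A hA x y
    simp only [LinearMap.smul_apply, real_inner_smul_left, real_inner_smul_right, hA x y]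
    ring

/-- The conformal Lie algebra `conf(n) = {λ·I + A : λ ∈ ℝ, A skew-symmetric}`. -/
def conf (n : ℕ) :
    Submodule ℝ (EuclideanSpace ℝ (Fin n) →ₗ[ℝ] EuclideanSpace ℝ (Fin n)) :=
  (ℝ ∙ (LinearMap.id : EuclideanSpace ℝ (Fin n) →ₗ[ℝ] EuclideanSpace ℝ (Fin n))) ⊔ skewSub n

end

open scoped RealInnerProductSpace

lemma mem_conf_iff {n : ℕ}
    (T : EuclideanSpace ℝ (Fin n) →ₗ[ℝ] EuclideanSpace ℝ (Fin n)) :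
    T ∈ conf n ↔ ∃ c : ℝ, ∀ y z, ⟪T y, z⟫ + ⟪y, T z⟫ = 2 * c * ⟪y, z⟫ := by
  constructor
  · intro h
    obtain ⟨s, hs, A, hA, rfl⟩ := Submodule.mem_sup.mp h
    obtain ⟨c, rfl⟩ := Submodule.mem_span_singleton.mp hs
    refine ⟨c, fun y z => ?_⟩
    have h1 : ⟪A y, z⟫ = -⟪y, A z⟫ := hA y z
    simp only [LinearMap.add_apply, LinearMap.smul_apply, LinearMap.id_apply,
      inner_add_left, inner_add_right, real_inner_smul_left, real_inner_smul_right]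
    rw [real_inner_comm z y] at *
    linarith
  · rintro ⟨c, hc⟩
    have hT : T = c • (LinearMap.id : EuclideanSpace ℝ (Fin n) →ₗ[ℝ]
        EuclideanSpace ℝ (Fin n)) + (T - c • LinearMap.id) := by abel
    rw [hT]
    refine Submodule.add_mem_sup
      (Submodule.smul_mem _ c (Submodule.mem_span_singleton_self _)) ?_
    intro y z
    have := hc y z
    simp only [LinearMap.sub_apply, LinearMap.smul_apply, LinearMap.id_apply,
      inner_sub_left, inner_sub_right, real_inner_smul_left, real_inner_smul_right]
    linarith

lemma update0_eq {n : ℕ} (v : Fin 2 → EuclideanSpace ℝ (Fin n))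
    (y : EuclideanSpace ℝ (Fin n)) : Function.update v 0 y = ![y, v 1] := by
  funext i; fin_cases i <;> simp

lemma update1_eq {n : ℕ} (v : Fin 2 → EuclideanSpace ℝ (Fin n))
    (y : EuclideanSpace ℝ (Fin n)) : Function.update v 1 y = ![v 0, y] := by
  funext i; fin_cases i <;> simp

lemma vec_eta {n : ℕ} (v : Fin 2 → EuclideanSpace ℝ (Fin n)) : v = ![v 0, v 1] := by
  funext i; fin_cases i <;> simp

/-- `M₂(conf(n))` consists exactly of the symmetric bilinear maps of the form
`⟨B(x,y), z⟩ = α(x)⟨y,z⟩ + α(y)⟨x,z⟩ − α(z)⟨x,y⟩` for some linear functional `α`. -/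
theorem mem_M2_conf_iff {n : ℕ}
    (B : MultilinearMap ℝ (fun _ : Fin 2 => EuclideanSpace ℝ (Fin n))
      (EuclideanSpace ℝ (Fin n))) :
    B ∈ Mk 2 (conf n) ↔
      ∃ a : EuclideanSpace ℝ (Fin n) →ₗ[ℝ] ℝ, ∀ x y z,
        ⟪B ![x, y], z⟫ = a x * ⟪y, z⟫ + a y * ⟪x, z⟫ - a z * ⟪x, y⟫ := by
  constructor
  · rintro ⟨hsym, hmem⟩
    -- symmetry in the first two arguments
    have Bsym : ∀ x y, B ![x, y] = B ![y, x] := by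
      intro x y
      have h := hsym (Equiv.swap 0 1) ![y, x]
      have hxy : ![y, x] ∘ (Equiv.swap (0 : Fin 2) 1) = ![x, y] := by
        funext i; fin_cases i <;> simp
      rw [hxy] at h
      exact h
    -- the key identity coming from conf-membership
    have key : ∀ x, ∃ c : ℝ, ∀ y z,
        ⟪B ![x, y], z⟫ + ⟪y, B ![x, z]⟫ = 2 * c * ⟪y, z⟫ := by
      intro x
      have hm := hmem ![x, x] 1
      obtain ⟨c, hc⟩ := (mem_conf_iff _).mp hm
      refine ⟨c, fun y z => ?_⟩
      have h1 := hc y z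
      simp only [MultilinearMap.toLinearMap_apply, update1_eq] at h1
      simpa using h1
    rcases Nat.eq_zero_or_pos n with hn | hn
    · subst hn
      refine ⟨0, fun x y z => ?_⟩
      have hz : z = 0 := Subsingleton.elim _ _
      subst hz; simp
    -- pick a unit vector
    set e : EuclideanSpace ℝ (Fin n) := EuclideanSpace.single ⟨0, hn⟩ 1 with he
    have hee : ⟪e, e⟫ = 1 := by
      simp [he, EuclideanSpace.inner_single_left, EuclideanSpace.single_apply]
    -- the linear functional
    refine ⟨⟨⟨fun x => ⟪B ![x, e], e⟫, ?_⟩, ?_⟩, ?_⟩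
    · intro x x'
      have h1 : ![x + x', e] = Function.update ![x, e] 0 (x + x') := by
        rw [update0_eq]; simp
      have h2 : ![x, e] = Function.update ![x, e] 0 x := by
        rw [update0_eq]; simp
      have h3 : ![x', e] = Function.update ![x, e] 0 x' := by
        rw [update0_eq]; simp
      rw [h1, B.map_update_add, ← h2, ← h3, inner_add_left]
    · intro c x
      have h1 : ![c • x, e] = Function.update ![x, e] 0 (c • x) := by
        rw [update0_eq]; simp
      have h2 : ![x, e] = Function.update ![x, e] 0 x := by
        rw [update0_eq]; simp
      simp only [RingHom.id_apply, smul_eq_mul]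
      rw [h1, B.map_update_smul, ← h2, real_inner_smul_left]
    · intro x y z
      simp only [LinearMap.coe_mk, AddHom.coe_mk]
      have rc : ∀ u v : EuclideanSpace ℝ (Fin n), ⟪u, v⟫ = ⟪v, u⟫ :=
        fun u v => real_inner_comm v u
      -- identify the constant in `key` with the functional
      have keya : ∀ x y z,
          ⟪B ![x, y], z⟫ + ⟪y, B ![x, z]⟫ = 2 * ⟪B ![x, e], e⟫ * ⟪y, z⟫ := by
        intro x y z
        obtain ⟨c, hc⟩ := key x
        have h1 := hc e e
        rw [hee, rc e (B ![x, e])] at h1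
        have hc' : c = ⟪B ![x, e], e⟫ := by linarith
        rw [← hc']; exact hc y z
      have e1 := keya x y z
      have e2 := keya y x z
      have e3 := keya z x y
      rw [rc y (B ![x, z]), Bsym x z, Bsym z x] at e1
      rw [rc x (B ![y, z]), Bsym y z, Bsym z y, Bsym y x] at e2
      rw [rc x (B ![z, y]), Bsym z y, Bsym z x] at e3
      linarith
  · rintro ⟨a, ha⟩
    have Bsym : ∀ x y, B ![x, y] = B ![y, x] := by
      intro x y
      apply ext_inner_right ℝ
      intro z
      rw [ha, ha, real_inner_comm x y]
      ring
    constructor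
    · intro σ v
      have hperm : σ = 1 ∨ σ = Equiv.swap 0 1 := by revert σ; decide
      rcases hperm with rfl | rfl
      · have h1 : v ∘ ⇑(1 : Equiv.Perm (Fin 2)) = v := by funext i; simp
        rw [h1]
      · have h1 : v ∘ (Equiv.swap (0 : Fin 2) 1) = ![v 1, v 0] := by
          funext i; fin_cases i <;> simp
        rw [h1, Bsym]
        exact (congrArg B (vec_eta v)).symm
    · intro v i
      fin_cases i
      · rw [mem_conf_iff]
        refine ⟨a (v 1), fun y z => ?_⟩
        simp only [MultilinearMap.toLinearMap_apply, Fin.mk_zero, Fin.mk_one, update0_eq]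
        rw [ha, real_inner_comm (B ![z, v 1]) y, ha,
          real_inner_comm y z, real_inner_comm y (v 1), real_inner_comm z (v 1)]
        ring
      · rw [mem_conf_iff]
        refine ⟨a (v 0), fun y z => ?_⟩
        simp only [MultilinearMap.toLinearMap_apply, Fin.mk_zero, Fin.mk_one, update1_eq]
        rw [ha, real_inner_comm (B ![v 0, z]) y, ha, real_inner_comm y z]
        ring
end

section
/- Let n ≥ 3 and conf(n) = {λI + A : λ ∈ ℝ, A skew-symmetric} ⊆ L(ℝⁿ, ℝⁿ). Then M_3(conf(n)) = 0: any symmetric trilinear map T : (ℝⁿ)³ → ℝⁿ all of whose partial contractions lie in conf(n) vanishes. -/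
open Function

open scoped RealInnerProductSpace

lemma exists_unit_orth {n : ℕ} (hn : 3 ≤ n) (x y : EuclideanSpace ℝ (Fin n)) :
    ∃ p : EuclideanSpace ℝ (Fin n), ‖p‖ = 1 ∧ ⟪x, p⟫ = 0 ∧ ⟪y, p⟫ = 0 := by
  classical
  set K : Submodule ℝ (EuclideanSpace ℝ (Fin n)) := Submodule.span ℝ {x, y} with hK
  have hKle : Module.finrank ℝ K ≤ 2 := by
    refine (finrank_span_le_card _).trans ?_
    have : ({x, y} : Set _).toFinset ⊆ {x, y} := by simp [Set.toFinset_subset]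
    calc ({x, y} : Set _).toFinset.card ≤ ({x, y} : Finset _).card := Finset.card_le_card this
      _ ≤ 2 := Finset.card_insert_le _ _ |>.trans (by simp)
  have hsum : Module.finrank ℝ K + Module.finrank ℝ Kᗮ = n := by
    rw [Submodule.finrank_add_finrank_orthogonal]
    simp [finrank_euclideanSpace_fin]
  have hpos : Kᗮ ≠ ⊥ := by
    intro h
    rw [h, finrank_bot] at hsum
    omega
  obtain ⟨v, hv, hv0⟩ := Submodule.exists_mem_ne_zero_of_ne_bot hpos
  have hxK : x ∈ K := Submodule.subset_span (by simp)
  have hyK : y ∈ K := Submodule.subset_span (by simp)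
  have hnv : ‖v‖ ≠ 0 := norm_ne_zero_iff.mpr hv0
  refine ⟨‖v‖⁻¹ • v, ?_, ?_, ?_⟩
  · simp [norm_smul, inv_mul_cancel₀ hnv]
  · rw [real_inner_smul_right, (Submodule.mem_orthogonal K v).mp hv x hxK, mul_zero]
  · rw [real_inner_smul_right, (Submodule.mem_orthogonal K v).mp hv y hyK, mul_zero]

lemma conf_exists {n : ℕ} {L : EuclideanSpace ℝ (Fin n) →ₗ[ℝ] EuclideanSpace ℝ (Fin n)}
    (h : L ∈ conf n) : ∃ c : ℝ, ∀ z w, ⟪L z, w⟫ + ⟪z, L w⟫ = 2 * c * ⟪z, w⟫ := by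
  obtain ⟨a, ha, A, hA, hsum⟩ := Submodule.mem_sup.mp h
  obtain ⟨c, rfl⟩ := Submodule.mem_span_singleton.mp ha
  have hA' : ∀ z w, ⟪A z, w⟫ = -⟪z, A w⟫ := hA
  refine ⟨c, fun z w => ?_⟩
  rw [← hsum]
  simp only [LinearMap.add_apply, LinearMap.smul_apply, LinearMap.id_apply, inner_add_left,
    inner_add_right, real_inner_smul_left, real_inner_smul_right, hA' z w]
  ring


/-- For `n ≥ 3`, `M₃(conf(n)) = 0`. -/
theorem M3_conf_eq_bot {n : ℕ} (hn : 3 ≤ n) :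
    Mk 3 (conf n) = ⊥ := by
  classical
  rw [Submodule.eq_bot_iff]
  rintro T ⟨hsym, hmem⟩
  set E := EuclideanSpace ℝ (Fin n)
  set f : E → E → E → E := fun x y z => T ![x, y, z] with hf
  -- symmetries
  have key : ∀ (x y z : E) (σ : Equiv.Perm (Fin 3)), T (![x,y,z] ∘ σ) = f x y z :=
    fun x y z σ => hsym σ ![x,y,z]
  have hs13 : ∀ x y z, f x y z = f z y x := by
    intro x y z
    have := key z y x (Equiv.swap 0 2)
    have hc : ![z,y,x] ∘ (Equiv.swap (0:Fin 3) 2) = ![x,y,z] := by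
      funext i; fin_cases i <;> simp [Equiv.swap_apply_def]
    rw [hc] at this
    exact this
  have hs23 : ∀ x y z, f x y z = f x z y := by
    intro x y z
    have := key x z y (Equiv.swap 1 2)
    have hc : ![x,z,y] ∘ (Equiv.swap (1:Fin 3) 2) = ![x,y,z] := by
      funext i; fin_cases i <;> simp [Equiv.swap_apply_def]
    rw [hc] at this
    exact this
  -- extract b
  have hbex : ∀ x y : E, ∃ c : ℝ, ∀ z w, ⟪f x y z, w⟫ + ⟪f x y w, z⟫ = 2 * c * ⟪z, w⟫ := by
    intro x y
    obtain ⟨c, hc⟩ := conf_exists (hmem ![x, y, 0] 2)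
    refine ⟨c, fun z w => ?_⟩
    have hup : ∀ u : E, T.toLinearMap ![x, y, (0:E)] 2 u = f x y u := by
      intro u
      have : Function.update ![x, y, (0:E)] 2 u = ![x, y, u] := by
        funext i; fin_cases i <;> simp
      rw [MultilinearMap.toLinearMap_apply]  -- maybe wrong name
      rw [this]
    have := hc z w
    rwa [hup z, hup w, real_inner_comm (f x y w) z] at this
  choose b hb using hbex
  -- the formula for S
  have hS : ∀ x y z w : E, ⟪f x y z, w⟫ =
      b x y * ⟪z, w⟫ + b z y * ⟪x, w⟫ - b w y * ⟪x, z⟫ := by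
    intro x y z w
    have h1 := hb z y x w
    have h2 := hb w y z x
    have h3 := hb x y w z
    rw [← hs13 x y z] at h1
    rw [← hs13 z y w, ← hs13 x y w] at h2
    rw [real_inner_comm x z] at h2
    rw [real_inner_comm z w] at h3
    linarith
  -- the exchange identity
  have hstar : ∀ x y z w : E,
      b x y * ⟪z, w⟫ + b z y * ⟪x, w⟫ - b w y * ⟪x, z⟫ =
      b x z * ⟪y, w⟫ + b y z * ⟪x, w⟫ - b w z * ⟪x, y⟫ := by
    intro x y z w
    rw [← hS, ← hS, hs23]
  -- diagonal alternation on orthonormal pairs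
  have hAlt : ∀ u v : E, ‖u‖ = 1 → ‖v‖ = 1 → ⟪u, v⟫ = 0 → b u u = - b v v := by
    intro u v hu hv huv
    have := hstar u v u v
    have h1 : ⟪u, u⟫ = 1 := by
      rw [real_inner_self_eq_norm_sq, hu]; norm_num
    have h2 : ⟪v, v⟫ = 1 := by
      rw [real_inner_self_eq_norm_sq, hv]; norm_num
    rw [huv, h1, h2] at this
    linarith [this]
  -- b vanishes on unit diagonal
  have hdiag : ∀ z : E, ‖z‖ = 1 → b z z = 0 := by
    intro z hz
    obtain ⟨u, hu, hzu, -⟩ := exists_unit_orth hn z z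
    obtain ⟨v, hv, hzv, huv⟩ := exists_unit_orth hn z u
    have a1 := hAlt z u hz hu hzu
    have a2 := hAlt u v hu hv huv
    have a3 := hAlt z v hz hv hzv
    linarith
  -- b vanishes everywhere
  have hb0 : ∀ x y : E, b x y = 0 := by
    intro x y
    obtain ⟨p, hp, hxp, hyp⟩ := exists_unit_orth hn x y
    have := hstar x y p p
    have h1 : ⟪p, p⟫ = 1 := by
      rw [real_inner_self_eq_norm_sq, hp]; norm_num
    rw [hxp, hyp, h1, hdiag p hp] at this
    linarith
  -- conclude f = 0
  have hf0 : ∀ x y z : E, f x y z = 0 := by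
    intro x y z
    have : ⟪f x y z, f x y z⟫ = 0 := by
      rw [hS]
      simp [hb0]
    exact inner_self_eq_zero.mp this
  apply MultilinearMap.ext
  intro m
  have hm : m = ![m 0, m 1, m 2] := by
    funext i; fin_cases i <;> rfl
  show T m = 0
  rw [hm]
  exact hf0 (m 0) (m 1) (m 2)
end

section
/- Let Ω ⊆ ℝⁿ be open and connected with n ≥ 3, and let F ∈ C^∞(Ω,ℝⁿ) satisfy DF(x) = λ(x)I + A(x) for every x ∈ Ω, where λ(x) ∈ ℝ and A(x) ∈ so(n) is skew-symmetric. Then D³F ≡ 0 on Ω, i.e. F is a polynomial of degree at most 2 in x. -/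
open scoped RealInnerProductSpace

set_option maxHeartbeats 1000000

open ContinuousLinearMap in
/-- Auxiliary continuous linear functional `T ↦ ⟪v, T u⟫` on operators. -/
noncomputable def innerApply2 {n : ℕ} (u v : EuclideanSpace ℝ (Fin n)) :
    (EuclideanSpace ℝ (Fin n) →L[ℝ] EuclideanSpace ℝ (Fin n)) →L[ℝ] ℝ :=
  (innerSL ℝ v).comp (ContinuousLinearMap.apply ℝ (EuclideanSpace ℝ (Fin n)) u)

@[simp] lemma innerApply2_apply {n : ℕ} (u v : EuclideanSpace ℝ (Fin n))
    (T : EuclideanSpace ℝ (Fin n) →L[ℝ] EuclideanSpace ℝ (Fin n)) :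
    innerApply2 u v T = ⟪v, T u⟫ := rfl

open ContinuousLinearMap in
/-- Auxiliary continuous linear functional `T ↦ ⟪w, T u v⟫` on bilinear operators. -/
noncomputable def innerApply3 {n : ℕ} (u v w : EuclideanSpace ℝ (Fin n)) :
    (EuclideanSpace ℝ (Fin n) →L[ℝ]
      (EuclideanSpace ℝ (Fin n) →L[ℝ] EuclideanSpace ℝ (Fin n))) →L[ℝ] ℝ :=
  (innerApply2 v w).comp
    (ContinuousLinearMap.apply ℝ (EuclideanSpace ℝ (Fin n) →L[ℝ] EuclideanSpace ℝ (Fin n)) u)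

@[simp] lemma innerApply3_apply {n : ℕ} (u v w : EuclideanSpace ℝ (Fin n))
    (T : EuclideanSpace ℝ (Fin n) →L[ℝ]
      (EuclideanSpace ℝ (Fin n) →L[ℝ] EuclideanSpace ℝ (Fin n))) :
    innerApply3 u v w T = ⟪w, T u v⟫ := rfl

open ContinuousLinearMap Filter in
/-- If `F` is smooth on a connected open `Ω ⊆ ℝⁿ` (`n ≥ 3`) and at every point
`DF(x) = λ(x)·I + A(x)` with `A(x)` skew-symmetric, then `D³F ≡ 0` on `Ω`. -/
theorem third_derivative_vanishes {n : ℕ} (hn : 3 ≤ n)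
    (Ω : Set (EuclideanSpace ℝ (Fin n))) (hΩ : IsOpen Ω) (hconn : IsConnected Ω)
    (F : EuclideanSpace ℝ (Fin n) → EuclideanSpace ℝ (Fin n))
    (hF : ContDiffOn ℝ (⊤ : ℕ∞) F Ω)
    (hDF : ∀ x ∈ Ω, ∃ (c : ℝ) (S : EuclideanSpace ℝ (Fin n) →ₗ[ℝ] EuclideanSpace ℝ (Fin n)),
      (∀ u v, ⟪S u, v⟫ = -⟪u, S v⟫) ∧
      (fderiv ℝ F x).toLinearMap = c • LinearMap.id + S) :
    ∀ x ∈ Ω, iteratedFDerivWithin ℝ 3 F Ω x = 0 := by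
  have hD1 : ContDiffOn ℝ (⊤ : ℕ∞) (fderiv ℝ F) Ω := hF.fderiv_of_isOpen hΩ (by simp)
  have hD2 : ContDiffOn ℝ (⊤ : ℕ∞) (fderiv ℝ (fderiv ℝ F)) Ω := hD1.fderiv_of_isOpen hΩ (by simp)
  -- Step 1 : the smooth conformal factor
  obtain ⟨c, hc, key1⟩ : ∃ c : EuclideanSpace ℝ (Fin n) → ℝ, ContDiffOn ℝ (⊤ : ℕ∞) c Ω ∧
      ∀ y ∈ Ω, ∀ u v, ⟪fderiv ℝ F y u, v⟫ + ⟪fderiv ℝ F y v, u⟫ = 2 * c y * ⟪u, v⟫ := by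
    have i0 : Fin n := ⟨0, by omega⟩
    refine ⟨fun z => ⟪EuclideanSpace.single i0 (1:ℝ),
        fderiv ℝ F z (EuclideanSpace.single i0 (1:ℝ))⟫, ?_, ?_⟩
    · exact ((innerSL ℝ (EuclideanSpace.single i0 (1:ℝ))).comp
        (ContinuousLinearMap.apply ℝ _
          (EuclideanSpace.single i0 (1:ℝ)))).contDiff.comp_contDiffOn hD1
    · intro y hy u v
      obtain ⟨a, S, hskew, hEq⟩ := hDF y hy
      have h1 : ∀ w, fderiv ℝ F y w = a • w + S w := by
        intro w
        have := congrArg (fun T : _ →ₗ[ℝ] _ => T w) hEq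
        simpa using this
      have hself : ∀ w : EuclideanSpace ℝ (Fin n), ⟪S w, w⟫ = 0 := by
        intro w
        have h := hskew w w
        have h2 : ⟪w, S w⟫ = ⟪S w, w⟫ := real_inner_comm _ _
        linarith
      have hca : ⟪EuclideanSpace.single i0 (1:ℝ),
          fderiv ℝ F y (EuclideanSpace.single i0 (1:ℝ))⟫ = a := by
        rw [h1, inner_add_right, inner_smul_right]
        have h2 : ⟪EuclideanSpace.single i0 (1:ℝ), S (EuclideanSpace.single i0 (1:ℝ))⟫ = 0 := by
          rw [real_inner_comm]; exact hself _
        have h3 : ⟪EuclideanSpace.single i0 (1:ℝ), EuclideanSpace.single i0 (1:ℝ)⟫ = 1 := by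
          simp [EuclideanSpace.inner_single_left, EuclideanSpace.single_apply]
        rw [h2, h3]; ring
      show _ = 2 * (⟪EuclideanSpace.single i0 (1:ℝ),
        fderiv ℝ F y (EuclideanSpace.single i0 (1:ℝ))⟫) * ⟪u,v⟫
      rw [hca, h1, h1]
      rw [inner_add_left, inner_add_left, inner_smul_left]
      have h4 : ⟪S u, v⟫ = -⟪S v, u⟫ := by rw [hskew u v, real_inner_comm]
      have h5 : ⟪u, v⟫ = ⟪v, u⟫ := real_inner_comm _ _
      rw [inner_smul_left]
      have h6 : a * ⟪u,v⟫ = a * ⟪v,u⟫ := by rw [h5]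
      simp only [RCLike.conj_to_real] at h6 ⊢
      linarith
  have hc' : ContDiffOn ℝ (⊤ : ℕ∞) (fderiv ℝ c) Ω := hc.fderiv_of_isOpen hΩ (by simp)
  -- Step 2 : differentiate the conformality relation
  have key2 : ∀ y ∈ Ω, ∀ w u v,
      ⟪fderiv ℝ (fderiv ℝ F) y w u, v⟫ + ⟪fderiv ℝ (fderiv ℝ F) y w v, u⟫
        = 2 * fderiv ℝ c y w * ⟪u, v⟫ := by
    intro y hy w u v
    have hGd : DifferentiableAt ℝ (fderiv ℝ F) y :=
      (hD1.contDiffAt (hΩ.mem_nhds hy)).differentiableAt (by simp)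
    have hcd : DifferentiableAt ℝ c y :=
      (hc.contDiffAt (hΩ.mem_nhds hy)).differentiableAt (by simp)
    have h1 : HasFDerivAt
        (fun z => (innerApply2 u v) (fderiv ℝ F z)
          + (innerApply2 v u) (fderiv ℝ F z))
        (((innerApply2 u v).comp
            (fderiv ℝ (fderiv ℝ F) y))
          + ((innerApply2 v u).comp
            (fderiv ℝ (fderiv ℝ F) y))) y :=
      ((innerApply2 u v).hasFDerivAt.comp y
          hGd.hasFDerivAt).add
        ((innerApply2 v u).hasFDerivAt.comp y
          hGd.hasFDerivAt)
    have h2 : HasFDerivAt (fun z => (2 * ⟪u, v⟫) * c z) ((2 * ⟪u, v⟫) • fderiv ℝ c y) y :=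
      hcd.hasFDerivAt.const_mul _
    have heq : (fun z => (innerApply2 u v) (fderiv ℝ F z)
          + (innerApply2 v u) (fderiv ℝ F z))
        =ᶠ[nhds y] (fun z => (2 * ⟪u, v⟫) * c z) := by
      filter_upwards [hΩ.mem_nhds hy] with z hz
      have hz1 := key1 z hz u v
      simp only [innerApply2_apply, innerApply3_apply, ContinuousLinearMap.comp_apply, ContinuousLinearMap.apply_apply, innerSL_apply_apply]
      have e1 : ⟪v, fderiv ℝ F z u⟫ = ⟪fderiv ℝ F z u, v⟫ := real_inner_comm _ _
      have e2 : ⟪u, fderiv ℝ F z v⟫ = ⟪fderiv ℝ F z v, u⟫ := real_inner_comm _ _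
      rw [e1, e2]; linarith
    have hfd := h1.fderiv
    rw [heq.fderiv_eq, h2.fderiv] at hfd
    have := congrArg (fun L : _ →L[ℝ] ℝ => L w) hfd
    simp only [innerApply2_apply, ContinuousLinearMap.add_apply, ContinuousLinearMap.comp_apply,
      ContinuousLinearMap.apply_apply, innerSL_apply_apply, ContinuousLinearMap.smul_apply,
      smul_eq_mul] at this
    have e1 : ⟪v, fderiv ℝ (fderiv ℝ F) y w u⟫ = ⟪fderiv ℝ (fderiv ℝ F) y w u, v⟫ :=
      real_inner_comm _ _
    have e2 : ⟪u, fderiv ℝ (fderiv ℝ F) y w v⟫ = ⟪fderiv ℝ (fderiv ℝ F) y w v, u⟫ :=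
      real_inner_comm _ _
    rw [e1, e2] at this
    linarith
  -- symmetry of the second derivative
  have sym2 : ∀ y ∈ Ω, ∀ u v, fderiv ℝ (fderiv ℝ F) y u v = fderiv ℝ (fderiv ℝ F) y v u :=
    fun y hy => (hF.contDiffAt (hΩ.mem_nhds hy)).isSymmSndFDerivAt (by rw [minSmoothness_of_isRCLikeNormedField]; exact WithTop.coe_le_coe.mpr le_top)
  -- Step 3 : the explicit formula for the second derivative
  have key3 : ∀ y ∈ Ω, ∀ u v w, ⟪fderiv ℝ (fderiv ℝ F) y u v, w⟫
      = fderiv ℝ c y u * ⟪v, w⟫ + fderiv ℝ c y v * ⟪u, w⟫ - fderiv ℝ c y w * ⟪u, v⟫ := by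
    intro y hy u v w
    have A := key2 y hy u v w
    have B := key2 y hy v u w
    have C := key2 y hy w u v
    have s1 : ⟪fderiv ℝ (fderiv ℝ F) y u w, v⟫ = ⟪fderiv ℝ (fderiv ℝ F) y w u, v⟫ := by
      rw [sym2 y hy u w]
    have s2 : ⟪fderiv ℝ (fderiv ℝ F) y v w, u⟫ = ⟪fderiv ℝ (fderiv ℝ F) y w v, u⟫ := by
      rw [sym2 y hy v w]
    have s3 : ⟪fderiv ℝ (fderiv ℝ F) y v u, w⟫ = ⟪fderiv ℝ (fderiv ℝ F) y u v, w⟫ := by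
      rw [sym2 y hy v u]
    have c1 : ⟪v, w⟫ = ⟪w, v⟫ := real_inner_comm _ _
    have c2 : ⟪u, w⟫ = ⟪w, u⟫ := real_inner_comm _ _
    have d1 : fderiv ℝ c y u * ⟪v, w⟫ = fderiv ℝ c y u * ⟪w, v⟫ := by rw [c1]
    have d2 : fderiv ℝ c y v * ⟪u, w⟫ = fderiv ℝ c y v * ⟪w, u⟫ := by rw [c2]
    linarith
  intro x hx
  -- Step 4 : differentiate the formula for the second derivative
  have hcd2 : DifferentiableAt ℝ (fderiv ℝ c) x :=
    (hc'.contDiffAt (hΩ.mem_nhds hx)).differentiableAt (by simp)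
  have hD2d : DifferentiableAt ℝ (fderiv ℝ (fderiv ℝ F)) x :=
    (hD2.contDiffAt (hΩ.mem_nhds hx)).differentiableAt (by simp)
  have key4 : ∀ s u v w, ⟪fderiv ℝ (fderiv ℝ (fderiv ℝ F)) x s u v, w⟫
      = fderiv ℝ (fderiv ℝ c) x s u * ⟪v, w⟫ + fderiv ℝ (fderiv ℝ c) x s v * ⟪u, w⟫
        - fderiv ℝ (fderiv ℝ c) x s w * ⟪u, v⟫ := by
    intro s u v w
    have h1 : HasFDerivAt
        (fun z => (innerApply3 u v w) (fderiv ℝ (fderiv ℝ F) z))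
        ((innerApply3 u v w).comp (fderiv ℝ (fderiv ℝ (fderiv ℝ F)) x)) x := by
      have h := (innerApply3 u v w).hasFDerivAt.comp x (f := fderiv ℝ (fderiv ℝ F))
        (f' := fderiv ℝ (fderiv ℝ (fderiv ℝ F)) x) hD2d.hasFDerivAt
      exact h
    have h2 : HasFDerivAt
        (fun z => (ContinuousLinearMap.apply ℝ ℝ u) (fderiv ℝ c z) * ⟪v, w⟫
          + (ContinuousLinearMap.apply ℝ ℝ v) (fderiv ℝ c z) * ⟪u, w⟫
          - (ContinuousLinearMap.apply ℝ ℝ w) (fderiv ℝ c z) * ⟪u, v⟫)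
        ((⟪v, w⟫ • ((ContinuousLinearMap.apply ℝ ℝ u).comp (fderiv ℝ (fderiv ℝ c) x))
          + ⟪u, w⟫ • ((ContinuousLinearMap.apply ℝ ℝ v).comp (fderiv ℝ (fderiv ℝ c) x)))
          - ⟪u, v⟫ • ((ContinuousLinearMap.apply ℝ ℝ w).comp (fderiv ℝ (fderiv ℝ c) x))) x :=
      ((((ContinuousLinearMap.apply ℝ ℝ u).hasFDerivAt.comp x hcd2.hasFDerivAt).mul_const
          _).add
        (((ContinuousLinearMap.apply ℝ ℝ v).hasFDerivAt.comp x hcd2.hasFDerivAt).mul_const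
          _)).sub
        (((ContinuousLinearMap.apply ℝ ℝ w).hasFDerivAt.comp x hcd2.hasFDerivAt).mul_const _)
    have heq : (fun z => (innerApply3 u v w) (fderiv ℝ (fderiv ℝ F) z))
        =ᶠ[nhds x] (fun z => (ContinuousLinearMap.apply ℝ ℝ u) (fderiv ℝ c z) * ⟪v, w⟫
          + (ContinuousLinearMap.apply ℝ ℝ v) (fderiv ℝ c z) * ⟪u, w⟫
          - (ContinuousLinearMap.apply ℝ ℝ w) (fderiv ℝ c z) * ⟪u, v⟫) := by
      filter_upwards [hΩ.mem_nhds hx] with z hz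
      have hz1 := key3 z hz u v w
      simp only [innerApply2_apply, innerApply3_apply, ContinuousLinearMap.comp_apply, ContinuousLinearMap.apply_apply, innerSL_apply_apply]
      have e1 : ⟪w, fderiv ℝ (fderiv ℝ F) z u v⟫ = ⟪fderiv ℝ (fderiv ℝ F) z u v, w⟫ :=
        real_inner_comm _ _
      rw [e1]; linarith
    have hfd := h1.fderiv
    rw [heq.fderiv_eq, h2.fderiv] at hfd
    have := congrArg (fun L : _ →L[ℝ] ℝ => L s) hfd
    simp only [innerApply3_apply, ContinuousLinearMap.add_apply, ContinuousLinearMap.sub_apply,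
      ContinuousLinearMap.comp_apply, ContinuousLinearMap.apply_apply, innerSL_apply_apply,
      ContinuousLinearMap.smul_apply, smul_eq_mul] at this
    have e1 : ⟪w, fderiv ℝ (fderiv ℝ (fderiv ℝ F)) x s u v⟫
        = ⟪fderiv ℝ (fderiv ℝ (fderiv ℝ F)) x s u v, w⟫ := real_inner_comm _ _
    rw [e1] at this
    linarith
  -- symmetries at x
  have symM : ∀ s u, fderiv ℝ (fderiv ℝ c) x s u = fderiv ℝ (fderiv ℝ c) x u s :=
    (hc.contDiffAt (hΩ.mem_nhds hx)).isSymmSndFDerivAt (by simp; exact WithTop.coe_le_coe.mpr le_top)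
  have symD3 : ∀ s u, fderiv ℝ (fderiv ℝ (fderiv ℝ F)) x s u
      = fderiv ℝ (fderiv ℝ (fderiv ℝ F)) x u s :=
    (hD1.contDiffAt (hΩ.mem_nhds hx)).isSymmSndFDerivAt (by simp; exact WithTop.coe_le_coe.mpr le_top)
  -- Step 5 : the key algebraic relation for M = D²c
  have rel : ∀ s u v w, fderiv ℝ (fderiv ℝ c) x s v * ⟪u, w⟫
      - fderiv ℝ (fderiv ℝ c) x s w * ⟪u, v⟫
      = fderiv ℝ (fderiv ℝ c) x u v * ⟪s, w⟫ - fderiv ℝ (fderiv ℝ c) x u w * ⟪s, v⟫ := by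
    intro s u v w
    have h1 := key4 s u v w
    have h2 := key4 u s v w
    have hsym : ⟪fderiv ℝ (fderiv ℝ (fderiv ℝ F)) x s u v, w⟫
        = ⟪fderiv ℝ (fderiv ℝ (fderiv ℝ F)) x u s v, w⟫ := by rw [symD3 s u]
    have hM : fderiv ℝ (fderiv ℝ c) x s u = fderiv ℝ (fderiv ℝ c) x u s := symM s u
    have hM2 : fderiv ℝ (fderiv ℝ c) x s u * ⟪v, w⟫
        = fderiv ℝ (fderiv ℝ c) x u s * ⟪v, w⟫ := by rw [hM]
    linarith
  -- Step 6 : conclude M = 0 on basis vectors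
  have hdelta : ∀ i j : Fin n, ⟪(EuclideanSpace.single i (1:ℝ) : EuclideanSpace ℝ (Fin n)),
      EuclideanSpace.single j (1:ℝ)⟫ = if i = j then (1:ℝ) else 0 := by
    intro i j
    rw [EuclideanSpace.inner_single_left, EuclideanSpace.single_apply]
    by_cases h : i = j <;> simp [h]
  have exists_p : ∀ a b : Fin n, ∃ p : Fin n, p ≠ a ∧ p ≠ b := by
    intro a b
    by_contra h
    push_neg at h
    have h' : ∀ p : Fin n, p = a ∨ p = b := by
      intro p
      by_cases hp : p = a
      · exact Or.inl hp
      · exact Or.inr (h p hp)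
    have hsub : (Finset.univ : Finset (Fin n)) ⊆ {a, b} := by
      intro p _
      rcases h' p with h1 | h1 <;> simp [h1]
    have h1 : (n : ℕ) ≤ 2 := by
      calc n = Finset.card (Finset.univ : Finset (Fin n)) := by simp
      _ ≤ Finset.card ({a, b} : Finset (Fin n)) := Finset.card_le_card hsub
      _ ≤ 2 := Finset.card_insert_le _ _ |>.trans (by simp)
    omega
  have step : ∀ a b p : Fin n, p ≠ a → p ≠ b →
      fderiv ℝ (fderiv ℝ c) x (EuclideanSpace.single a 1) (EuclideanSpace.single b 1)
        = -(fderiv ℝ (fderiv ℝ c) x (EuclideanSpace.single p 1) (EuclideanSpace.single p 1))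
          * ⟪(EuclideanSpace.single a (1:ℝ) : EuclideanSpace ℝ (Fin n)),
              EuclideanSpace.single b (1:ℝ)⟫ := by
    intro a b p hpa hpb
    have h := rel (EuclideanSpace.single a 1) (EuclideanSpace.single p 1)
      (EuclideanSpace.single b 1) (EuclideanSpace.single p 1)
    rw [hdelta p p, hdelta p b, hdelta a p] at h
    rw [if_pos rfl, if_neg hpb, if_neg (show a ≠ p from fun hh => hpa hh.symm)] at h
    linarith [h]
  have diag : ∀ p : Fin n, fderiv ℝ (fderiv ℝ c) x (EuclideanSpace.single p 1)
      (EuclideanSpace.single p 1) = 0 := by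
    intro p
    obtain ⟨q, hqp, -⟩ := exists_p p p
    obtain ⟨r, hrp, hrq⟩ := exists_p p q
    have hpp : ⟪(EuclideanSpace.single p (1:ℝ) : EuclideanSpace ℝ (Fin n)),
        EuclideanSpace.single p (1:ℝ)⟫ = 1 := by rw [hdelta]; simp
    have hqq : ⟪(EuclideanSpace.single q (1:ℝ) : EuclideanSpace ℝ (Fin n)),
        EuclideanSpace.single q (1:ℝ)⟫ = 1 := by rw [hdelta]; simp
    have h1 := step p p q hqp hqp
    have h2 := step p p r hrp hrp
    have h3 := step q q r hrq hrq
    rw [hpp] at h1 h2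
    rw [hqq] at h3
    linarith
  have hm : ∀ a b : Fin n,
      fderiv ℝ (fderiv ℝ c) x (EuclideanSpace.single a 1) (EuclideanSpace.single b 1) = 0 := by
    intro a b
    obtain ⟨p, hpa, hpb⟩ := exists_p a b
    rw [step a b p hpa hpb, diag p]
    ring
  -- Step 7 : M = 0 as a bilinear map
  have Mzero : fderiv ℝ (fderiv ℝ c) x = 0 := by
    have inner0 : ∀ a : Fin n, fderiv ℝ (fderiv ℝ c) x (EuclideanSpace.single a 1) = 0 := by
      intro a
      apply ContinuousLinearMap.coe_injective
      apply Module.Basis.ext (EuclideanSpace.basisFun (Fin n) ℝ).toBasis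
      intro j
      simp only [OrthonormalBasis.coe_toBasis, EuclideanSpace.basisFun_apply]
      simpa using hm a j
    apply ContinuousLinearMap.coe_injective
    apply Module.Basis.ext (EuclideanSpace.basisFun (Fin n) ℝ).toBasis
    intro i
    simp only [OrthonormalBasis.coe_toBasis, EuclideanSpace.basisFun_apply]
    simpa using inner0 i
  -- Step 8 : D³F(x) = 0
  have hD3x : fderiv ℝ (fderiv ℝ (fderiv ℝ F)) x = 0 := by
    have zero3 : ∀ s u v, fderiv ℝ (fderiv ℝ (fderiv ℝ F)) x s u v = 0 := by
      intro s u v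
      have h := key4 s u v (fderiv ℝ (fderiv ℝ (fderiv ℝ F)) x s u v)
      rw [Mzero] at h
      simp only [ContinuousLinearMap.zero_apply, zero_mul, add_zero, sub_zero] at h
      exact inner_self_eq_zero.mp h
    ext s u v
    simp [zero3 s u v]
  -- Step 9 : conclude for the iterated derivative within Ω
  rw [iteratedFDerivWithin_of_isOpen 3 hΩ hx]
  refine ContinuousMultilinearMap.ext fun m => ?_
  show iteratedFDeriv ℝ (2 + 1) F x m = _
  rw [iteratedFDeriv_succ_apply_right, iteratedFDeriv_two_apply]
  rw [hD3x]
  simp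
end

section
/- Let V ⊆ L(ℍ, ℍ) ≅ L(ℝ⁴, ℝ⁴) be the space of right multiplications by quaternions, V = {x ↦ x·a : a ∈ ℍ}. Then M_2(V) = 0: any symmetric bilinear map B : ℍ × ℍ → ℍ such that for each x the map y ↦ B(x,y) is right multiplication by some quaternion must vanish. -/
open scoped Quaternion

/-! Evaluating at `1` and using symmetry gives `B x y = y * (x * a)` with `a = B 1 1`; symmetry
once more gives `(x * y - y * x) * a = 0`, and two non-commuting quaternions force `a = 0`. -/

theorem apply_eq_mul_mul_apply_one_one {M : Type*} [Monoid M] {B : M → M → M}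
    (hsym : ∀ x y, B x y = B y x) (h : ∀ x, ∃ a, ∀ y, B x y = y * a) (x y : M) :
    B x y = y * (x * B 1 1) := by
  obtain ⟨a, ha⟩ := h x
  have hB1 : ∀ z, B 1 z = z * B 1 1 := by
    obtain ⟨b, hb⟩ := h 1
    simpa only [hb 1, one_mul] using hb
  rw [ha, ← hB1, hsym, ha, one_mul]

theorem eq_zero_of_mul_left_comm {A : Type*} [Ring A] [NoZeroDivisors A] {x y a : A}
    (hxy : x * y ≠ y * x) (h : x * (y * a) = y * (x * a)) : a = 0 := by
  have hcomm : (x * y - y * x) * a = 0 := by rw [sub_mul, mul_assoc, mul_assoc, h, sub_self]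
  exact (mul_eq_zero.mp hcomm).resolve_left (sub_ne_zero.mpr hxy)

theorem Quaternion.exists_mul_ne_mul {R : Type*} [CommRing R] [NeZero (2 : R)] :
    ∃ x y : ℍ[R], x * y ≠ y * x := by
  let i : ℍ[R] := ⟨0, 1, 0, 0⟩
  let j : ℍ[R] := ⟨0, 0, 1, 0⟩
  refine ⟨i, j, fun h => two_ne_zero (α := R) ?_⟩
  have hk : (i * j).imK = (j * i).imK := by rw [h]
  rw [Quaternion.imK_mul, Quaternion.imK_mul] at hk
  simp only [mul_zero, mul_one, zero_add, sub_zero, add_zero, zero_sub, i, j] at hk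
  linear_combination hk

/-- `M₂` of the space of right quaternion multiplications vanishes: a symmetric
real-bilinear map `B : ℍ × ℍ → ℍ` such that each `B(x,·)` is right multiplication
by a quaternion is identically zero. -/
theorem M2_right_mul_quaternion_eq_zero
    (B : ℍ[ℝ] →ₗ[ℝ] ℍ[ℝ] →ₗ[ℝ] ℍ[ℝ])
    (hsym : ∀ x y, B x y = B y x)
    (h : ∀ x : ℍ[ℝ], ∃ a : ℍ[ℝ], ∀ y, B x y = y * a) :
    B = 0 := by
  have hB : ∀ x y, B x y = y * (x * B 1 1) := apply_eq_mul_mul_apply_one_one hsym h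
  obtain ⟨i, j, hij⟩ := Quaternion.exists_mul_ne_mul (R := ℝ)
  have ha : B 1 1 = 0 := eq_zero_of_mul_left_comm hij (by rw [← hB, hsym, hB])
  exact LinearMap.ext₂ fun x y => by simp [hB x y, ha]
end

section
/- Let W = span{I₂, J₂} ⊆ L(ℝ², ℝ²) with J₂ = [[0,−1],[1,0]]. For every k ≥ 0, dim M_k(W) = 2. -/
open Function

/-! Under `ℝ² ≅ ℂ`, `W` is the space of multiplications by complex numbers. An element of `W`
vanishing at `e₁ = 1` is zero, so a multilinear map whose contractions lie in `W` and which
vanishes at `(e₁, …, e₁)` vanishes everywhere: its slots can be freed from `e₁` one at a time.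
Hence evaluation at `(e₁, …, e₁)` is injective on `M_k(W)`, and it is onto `ℝ²` because the
polarization `c z₁ ⋯ z_k` of `c zᵏ` lies in `M_k(W)` and takes the value `c` there. -/

open Finset

theorem LinearMap.eq_zero_of_mem_span_pair_of_apply_eq_zero {R M N : Type*} [CommRing R]
    [AddCommMonoid M] [Module R M] [AddCommGroup N] [Module R N] {f g L : M →ₗ[R] N} {e : M}
    (hfg : LinearIndependent R ![f e, g e]) (hL : L ∈ Submodule.span R {f, g}) (he : L e = 0) :
    L = 0 := by
  obtain ⟨a, b, rfl⟩ := Submodule.mem_span_pair.1 hL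
  obtain ⟨rfl, rfl⟩ := LinearIndependent.pair_iff.1 hfg a b he
  simp

theorem MultilinearMap.eq_zero_of_toLinearMap_mem {R ι M N : Type*} [CommSemiring R] [Fintype ι]
    [DecidableEq ι] [AddCommMonoid M] [Module R M] [AddCommMonoid N] [Module R N]
    {V : Submodule R (M →ₗ[R] N)} {e : M}
    (hV : ∀ L ∈ V, L e = 0 → L = 0) {T : MultilinearMap R (fun _ : ι => M) N}
    (hT : ∀ x i, T.toLinearMap x i ∈ V) (he : T (fun _ => e) = 0) : T = 0 := by
  suffices h : ∀ s : Finset ι, ∀ x, (∀ i ∉ s, x i = e) → T x = 0 from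
    MultilinearMap.ext fun x => h univ x (by simp)
  intro s
  induction s using Finset.induction_on with
  | empty =>
    intro x hx
    rwa [show x = fun _ => e from funext fun i => hx i (notMem_empty i)]
  | insert i s _ ih =>
    intro x hx
    have hupdate : T (update x i e) = 0 := by
      refine ih _ fun j hj => ?_
      rcases eq_or_ne j i with rfl | hji
      · simp
      · simpa [hji] using hx j (by simp [hji, hj])
    have hzero : T.toLinearMap x i = 0 := hV _ (hT x i) hupdate
    simpa using congr($hzero (x i))

noncomputable def complexToFin2 : ℂ ≃ₗ[ℝ] (Fin 2 → ℝ) := Complex.basisOneI.equivFun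

@[simp]
theorem complexToFin2_apply (z : ℂ) : complexToFin2 z = ![z.re, z.im] := by
  simp [complexToFin2, Complex.coe_basisOneI_repr]

@[simp]
theorem complexToFin2_symm_apply (v : Fin 2 → ℝ) : complexToFin2.symm v = ⟨v 0, v 1⟩ := by
  apply complexToFin2.injective
  ext j
  fin_cases j <;> simp

theorem complexToFin2_conj_mulLeft (w : ℂ) :
    complexToFin2.conj (LinearMap.mulLeft ℝ w) =
      w.re • LinearMap.id + w.im • Matrix.toLin' !![(0 : ℝ), -1; 1, 0] := by
  refine LinearMap.ext fun v => ?_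
  ext j
  fin_cases j <;> simp [LinearEquiv.conj_apply, dotProduct, Fin.sum_univ_two]; ring

noncomputable def holomorphicMultilinear (k : ℕ) (c : ℂ) :
    MultilinearMap ℝ (fun _ : Fin k => Fin 2 → ℝ) (Fin 2 → ℝ) :=
  (complexToFin2.toLinearMap ∘ₗ LinearMap.mulLeft ℝ c).compMultilinearMap
    ((MultilinearMap.mkPiAlgebra ℝ (Fin k) ℂ).compLinearMap fun _ => complexToFin2.symm.toLinearMap)

theorem holomorphicMultilinear_apply (k : ℕ) (c : ℂ) (x : Fin k → Fin 2 → ℝ) :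
    holomorphicMultilinear k c x = complexToFin2 (c * ∏ i, complexToFin2.symm (x i)) := by
  simp [holomorphicMultilinear]

theorem holomorphicMultilinear_toLinearMap (k : ℕ) (c : ℂ) (x : Fin k → Fin 2 → ℝ) (i : Fin k) :
    (holomorphicMultilinear k c).toLinearMap x i = complexToFin2.conj
      (LinearMap.mulLeft ℝ (c * ∏ j ∈ univ.erase i, complexToFin2.symm (x j))) := by
  refine LinearMap.ext fun z => ?_
  have hupdate : (fun j => complexToFin2.symm (update x i z j)) =
      update (fun j => complexToFin2.symm (x j)) i (complexToFin2.symm z) :=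
    funext (apply_update (fun _ => complexToFin2.symm) x i z)
  simp only [MultilinearMap.toLinearMap_apply, holomorphicMultilinear_apply, hupdate,
    prod_update_of_mem (mem_univ i), sdiff_singleton_eq_erase, LinearEquiv.conj_apply,
    LinearMap.comp_apply, LinearEquiv.coe_coe, LinearMap.mulLeft_apply]
  congr 1
  ring

theorem holomorphicMultilinear_mem_Mk (k : ℕ) (c : ℂ) :
    holomorphicMultilinear k c ∈
      Mk k (Submodule.span ℝ {LinearMap.id, Matrix.toLin' !![(0 : ℝ), -1; 1, 0]}) := by
  refine ⟨fun σ x => ?_, fun x i => ?_⟩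
  · simp only [holomorphicMultilinear_apply, comp_apply,
      Equiv.prod_comp σ fun i => complexToFin2.symm (x i)]
  · rw [holomorphicMultilinear_toLinearMap, complexToFin2_conj_mulLeft]
    exact Submodule.add_mem _ (Submodule.smul_mem _ _ (Submodule.subset_span (by simp)))
      (Submodule.smul_mem _ _ (Submodule.subset_span (by simp)))

theorem holomorphicMultilinear_apply_const_one (k : ℕ) (c : ℂ) :
    holomorphicMultilinear k c (fun _ => ![1, 0]) = complexToFin2 c := by
  have hone : complexToFin2.symm ![1, 0] = 1 := complexToFin2.symm_apply_eq.2 (by simp)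
  simp [holomorphicMultilinear_apply, hone]

/-- For `W = span {I₂, J₂} ⊆ L(ℝ²,ℝ²)`, `dim M_k(W) = 2` for every `k`. -/
theorem finrank_Mk_complex_span
    (J₂ : (Fin 2 → ℝ) →ₗ[ℝ] (Fin 2 → ℝ))
    (hJ : J₂ = Matrix.toLin' !![(0 : ℝ), -1; 1, 0])
    (W : Submodule ℝ ((Fin 2 → ℝ) →ₗ[ℝ] (Fin 2 → ℝ)))
    (hW : W = Submodule.span ℝ {LinearMap.id, J₂}) (k : ℕ) :
    Module.finrank ℝ (Mk k W) = 2 := by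
  let ev : Mk k W →ₗ[ℝ] (Fin 2 → ℝ) :=
    { toFun := fun T => T.1 fun _ => ![1, 0]
      map_add' := fun _ _ => rfl
      map_smul' := fun _ _ => rfl }
  have hJe : J₂ ![1, 0] = ![0, 1] := by
    rw [hJ]
    ext j
    fin_cases j <;> simp
  have hindep : LinearIndependent ℝ ![LinearMap.id (R := ℝ) ![1, 0], J₂ ![1, 0]] := by
    simp [hJe, LinearIndependent.pair_iff, funext_iff]
  have hinj : Injective ev := by
    rw [injective_iff_map_eq_zero]
    exact fun T hT => Subtype.ext <| MultilinearMap.eq_zero_of_toLinearMap_mem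
        (fun _ hL => LinearMap.eq_zero_of_mem_span_pair_of_apply_eq_zero hindep (hW ▸ hL)) T.2.2 hT
  have hsurj : Surjective ev := fun v =>
    ⟨⟨_, hW ▸ hJ ▸ holomorphicMultilinear_mem_Mk k (complexToFin2.symm v)⟩,
      (holomorphicMultilinear_apply_const_one k _).trans (complexToFin2.apply_symm_apply v)⟩
  rw [(LinearEquiv.ofBijective ev ⟨hinj, hsurj⟩).finrank_eq, Module.finrank_fin_fun]
end

section
/- Let V ⊆ L(ℝⁿ, ℝᵐ) be a linear subspace. If δ(V) < ∞, then V contains no rank-one operator and there exist no P ∈ GL(m), Q ∈ GL(n) with P·W·Q ⊆ V, where W = span{diag(I₂,0), diag(J₂,0)} ⊆ L(ℝⁿ, ℝᵐ) (I₂ the 2×2 identity and J₂ the 2×2 rotation by π/2, padded by zeros). -/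
/-!
Both obstructions come from a commutative `ℝ`-algebra `A` (`ℝ` for `ψ ⊗ w`, `ℂ` for `P·W·Q`) with
linear maps `ψ : E → A` and `e : A → F` such that `e ∘ (c • ψ) ∈ V` for every `c : A`. The map
`x ↦ e (ψ x₁ ⋯ ψ xₖ)` is symmetric, and its contraction in any one slot is `e ∘ (c • ψ)` with `c`
the product of the other factors, so it lies in `M_k(V)`; it is nonzero once `ψ v = 1` and
`e 1 ≠ 0`. Hence `M_k(V) ≠ 0` for every `k`. For `P·W·Q` the point is that multiplication by `c`
on `ℂ = ℝ²` is `Re c · I₂ + Im c · J₂`.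
-/

open Function

open Finset

section PowerMultilinear

variable {E F A : Type*} [AddCommGroup E] [Module ℝ E] [AddCommGroup F] [Module ℝ F]
  [CommRing A] [Algebra ℝ A]

def powerMultilinear (k : ℕ) (e : A →ₗ[ℝ] F) (ψ : E →ₗ[ℝ] A) :
    MultilinearMap ℝ (fun _ : Fin k => E) F :=
  e.compMultilinearMap ((MultilinearMap.mkPiAlgebra ℝ (Fin k) A).compLinearMap fun _ => ψ)

variable {k : ℕ} {e : A →ₗ[ℝ] F} {ψ : E →ₗ[ℝ] A}

@[simp]
theorem powerMultilinear_apply (x : Fin k → E) :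
    powerMultilinear k e ψ x = e (∏ i, ψ (x i)) := by
  simp [powerMultilinear]

theorem powerMultilinear_toLinearMap (x : Fin k → E) (i : Fin k) :
    (powerMultilinear k e ψ).toLinearMap x i = e ∘ₗ ((∏ j ∈ univ.erase i, ψ (x j)) • ψ) := by
  ext z
  have hrest : ∏ j ∈ univ.erase i, ψ (update x i z j) = ∏ j ∈ univ.erase i, ψ (x j) :=
    prod_congr rfl fun j hj => by rw [update_of_ne (ne_of_mem_erase hj)]
  simp [← mul_prod_erase _ _ (mem_univ i), hrest, mul_comm]

theorem powerMultilinear_mem_Mk {V : Submodule ℝ (E →ₗ[ℝ] F)} (hV : ∀ c : A, e ∘ₗ (c • ψ) ∈ V) :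
    powerMultilinear k e ψ ∈ Mk k V := by
  refine ⟨fun σ x => ?_, fun x i => ?_⟩
  · simp only [powerMultilinear_apply, comp_apply]
    rw [Equiv.prod_comp σ fun j => ψ (x j)]
  · rw [powerMultilinear_toLinearMap]
    exact hV _

theorem Mk_ne_bot_of_smul_comp_mem {V : Submodule ℝ (E →ₗ[ℝ] F)} (hV : ∀ c : A, e ∘ₗ (c • ψ) ∈ V)
    {v : E} (hv : ψ v = 1) (he : e 1 ≠ 0) (k : ℕ) : Mk k V ≠ ⊥ := by
  intro hbot
  have hT := (Submodule.eq_bot_iff _).mp hbot _ (powerMultilinear_mem_Mk (k := k) hV)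
  apply he
  simpa [hv] using congrArg (fun T => T fun _ => v) hT

end PowerMultilinear

theorem Mk_ne_bot_of_smulRight_mem {E F : Type*} [AddCommGroup E] [Module ℝ E] [AddCommGroup F]
    [Module ℝ F] {V : Submodule ℝ (E →ₗ[ℝ] F)} {ψ : E →ₗ[ℝ] ℝ} {w : F} (hψ : ψ ≠ 0) (hw : w ≠ 0)
    (hV : ψ.smulRight w ∈ V) (k : ℕ) : Mk k V ≠ ⊥ := by
  obtain ⟨v, hv⟩ : ∃ v, ψ v ≠ 0 := by
    by_contra! h
    exact hψ (LinearMap.ext h)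
  refine Mk_ne_bot_of_smul_comp_mem (e := LinearMap.toSpanSingleton ℝ F w) (ψ := ψ)
    (fun c => ?_) (v := (ψ v)⁻¹ • v) (by simp [hv]) (by simpa using hw) k
  convert V.smul_mem c hV using 1
  ext z
  simp [mul_smul]

section ComplexStructure

variable {m n : ℕ}

def idBlock₂ : Matrix (Fin m) (Fin n) ℝ :=
  Matrix.of fun i j => if (i : ℕ) = (j : ℕ) ∧ (i : ℕ) < 2 then 1 else 0

def rotBlock₂ : Matrix (Fin m) (Fin n) ℝ :=
  Matrix.of fun i j =>
    if (i : ℕ) = 0 ∧ (j : ℕ) = 1 then -1 else if (i : ℕ) = 1 ∧ (j : ℕ) = 0 then 1 else 0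

noncomputable def complexOfFirstTwo : (Fin (n + 2) → ℝ) →ₗ[ℝ] ℂ :=
  (LinearMap.proj 0).smulRight 1 + (LinearMap.proj 1).smulRight Complex.I

def firstTwoOfComplex : ℂ →ₗ[ℝ] (Fin (m + 2) → ℝ) :=
  Complex.reLm.smulRight (Pi.single 0 1) + Complex.imLm.smulRight (Pi.single 1 1)

theorem firstTwoOfComplex_comp_smul_complexOfFirstTwo (c : ℂ) :
    firstTwoOfComplex ∘ₗ (c • complexOfFirstTwo) =
      c.re • Matrix.toLin' (idBlock₂ : Matrix (Fin (m + 2)) (Fin (n + 2)) ℝ) +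
        c.im • Matrix.toLin' rotBlock₂ := by
  apply LinearMap.toMatrix'.injective
  ext i j
  simp only [firstTwoOfComplex, complexOfFirstTwo, idBlock₂, rotBlock₂,
    LinearMap.toMatrix'_apply, Matrix.toLin'_apply, Matrix.mulVec_single, Matrix.col_apply,
    Matrix.of_apply, LinearMap.add_apply, LinearMap.smul_apply, LinearMap.comp_apply,
    LinearMap.smulRight_apply, LinearMap.proj_apply, Complex.reLm_coe, Complex.imLm_coe,
    Pi.add_apply, Pi.smul_apply, Pi.single_apply, smul_eq_mul,
    Complex.real_smul, Complex.add_re, Complex.add_im, Complex.mul_re, Complex.mul_im,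
    Complex.ofReal_re, Complex.ofReal_im, Complex.I_re, Complex.I_im, Complex.one_re,
    Complex.one_im, Fin.ext_iff, Fin.val_zero, Fin.val_one, MulOpposite.op_one, one_smul]
  split_ifs <;> first | omega | ring

theorem Mk_ne_bot_of_map_span_le {V : Submodule ℝ ((Fin (n + 2) → ℝ) →ₗ[ℝ] (Fin (m + 2) → ℝ))}
    {P : (Fin (m + 2) → ℝ) ≃ₗ[ℝ] (Fin (m + 2) → ℝ)} {Q : (Fin (n + 2) → ℝ) ≃ₗ[ℝ] (Fin (n + 2) → ℝ)}
    (hPQ : (Submodule.span ℝ {Matrix.toLin' idBlock₂, Matrix.toLin' rotBlock₂}).map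
      (LinearEquiv.arrowCongr Q.symm P).toLinearMap ≤ V) (k : ℕ) : Mk k V ≠ ⊥ := by
  refine Mk_ne_bot_of_smul_comp_mem (e := P.toLinearMap ∘ₗ firstTwoOfComplex)
    (ψ := complexOfFirstTwo ∘ₗ Q.toLinearMap) (fun c => hPQ ?_) (v := Q.symm (Pi.single 0 1))
    ?_ ?_ k
  · have hconj : (P.toLinearMap ∘ₗ firstTwoOfComplex) ∘ₗ
          (c • (complexOfFirstTwo ∘ₗ Q.toLinearMap)) =
        LinearEquiv.arrowCongr Q.symm P (firstTwoOfComplex ∘ₗ (c • complexOfFirstTwo)) := by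
      ext; simp
    rw [hconj, firstTwoOfComplex_comp_smul_complexOfFirstTwo]
    exact Submodule.mem_map_of_mem <| add_mem
      (Submodule.smul_mem _ _ (Submodule.subset_span (Set.mem_insert _ _)))
      (Submodule.smul_mem _ _ (Submodule.subset_span (Set.mem_insert_of_mem _ rfl)))
  · simp [complexOfFirstTwo]
  · simp [firstTwoOfComplex]

end ComplexStructure

/-- Easy direction of the characterization theorem: if `δ(V) < ∞` then `V` contains no
rank-one operator `ψ ⊗ w` and no conjugate `P·W·Q` of the complex-multiplication space
`W = span{diag(I₂,0), diag(J₂,0)}`. -/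
theorem no_obstruction_of_delta_finite {n m : ℕ} (hn : 2 ≤ n) (hm : 2 ≤ m)
    (V : Submodule ℝ ((Fin n → ℝ) →ₗ[ℝ] (Fin m → ℝ)))
    (hδ : ∃ d : ℕ, ∀ k, d < k → Mk (E := Fin n → ℝ) (F := Fin m → ℝ) k V = ⊥)
    (W : Submodule ℝ ((Fin n → ℝ) →ₗ[ℝ] (Fin m → ℝ)))
    (hW : W = Submodule.span ℝ
      {Matrix.toLin' (Matrix.of fun (i : Fin m) (j : Fin n) =>
          if (i : ℕ) = (j : ℕ) ∧ (i : ℕ) < 2 then (1 : ℝ) else 0),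
       Matrix.toLin' (Matrix.of fun (i : Fin m) (j : Fin n) =>
          if (i : ℕ) = 0 ∧ (j : ℕ) = 1 then (-1 : ℝ)
          else if (i : ℕ) = 1 ∧ (j : ℕ) = 0 then 1 else 0)}) :
    (¬∃ (ψ : (Fin n → ℝ) →ₗ[ℝ] ℝ) (w : Fin m → ℝ),
        ψ ≠ 0 ∧ w ≠ 0 ∧ ψ.smulRight w ∈ V) ∧
    ¬∃ (P : (Fin m → ℝ) ≃ₗ[ℝ] (Fin m → ℝ)) (Q : (Fin n → ℝ) ≃ₗ[ℝ] (Fin n → ℝ)),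
        W.map (LinearEquiv.arrowCongr Q.symm P).toLinearMap ≤ V := by
  obtain ⟨d, hd⟩ := hδ
  have hbot := hd (d + 1) d.lt_succ_self
  obtain ⟨n, rfl⟩ := Nat.exists_eq_add_of_le' hn
  obtain ⟨m, rfl⟩ := Nat.exists_eq_add_of_le' hm
  subst hW
  refine ⟨fun ⟨ψ, w, hψ, hw, hV⟩ => ?_, fun ⟨P, Q, hPQ⟩ => ?_⟩
  · exact Mk_ne_bot_of_smulRight_mem hψ hw hV (d + 1) hbot
  · exact Mk_ne_bot_of_map_span_le hPQ (d + 1) hbot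
end
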